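/- Let H be a complex separable Hilbert space, K a bounded linear operator on H, and (f_k)_{k∈I} a Bessel sequence in H with synthesis operator T_F. Then a family (g_k)_{k∈I} in H is a K-dual of (f_k)_{k∈I} if and only if there exists a bounded linear operator M : ℓ²(I) → H such that T_F M* = K and g_k = M e_k for every k ∈ I, where (e_k) is the standard orthonormal basis of ℓ²(I). -/

import Mathlib

open ContinuousLinearMap

private lemma rpow_two_eq (y : ℝ) : y ^ (2:ℝ) = y ^ 2 := by
  rw [show (2:ℝ) = ((2:ℕ):ℝ) by norm_num, Real.rpow_natCast]

private lemma hasSum_TF_apply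
    {H : Type*} [NormedAddCommGroup H] [InnerProductSpace ℂ H] [CompleteSpace H]
    {I : Type*} [Countable I] [DecidableEq I]
    (TF : lp (fun _ : I => ℂ) 2 →L[ℂ] H) (f : I → H)
    (hTF : ∀ k, TF (lp.single 2 k 1) = f k) (u : lp (fun _ : I => ℂ) 2) :
    HasSum (fun k => (u k : ℂ) • f k) (TF u) := by
  have h1 : HasSum (fun k : I => lp.single 2 k (u k : ℂ)) u :=
    lp.hasSum_single ENNReal.ofNat_ne_top u
  have h2 := h1.mapL TF
  convert h2 using 2 with k
  have : lp.single 2 k (u k : ℂ) =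
      (u k : ℂ) • (lp.single 2 k (1 : ℂ) : lp (fun _ : I => ℂ) 2) := by
    rw [← lp.single_smul (E := fun _ : I => ℂ)]; norm_num
  rw [this, map_smul, hTF]

set_option maxHeartbeats 1600000 in
theorem K_dual_characterization
    {H : Type*} [NormedAddCommGroup H] [InnerProductSpace ℂ H]
    [CompleteSpace H] [TopologicalSpace.SeparableSpace H]
    {I : Type*} [Countable I] [DecidableEq I]
    (K : H →L[ℂ] H) (f g : I → H)
    (TF : lp (fun _ : I => ℂ) 2 →L[ℂ] H)
    (hTF : ∀ k, TF (lp.single 2 k 1) = f k)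
    (hf : ∃ B : ℝ, 0 < B ∧ ∀ x : H, Summable (fun k => ‖(inner ℂ (f k) x : ℂ)‖ ^ 2) ∧
      ∑' k, ‖(inner ℂ (f k) x : ℂ)‖ ^ 2 ≤ B * ‖x‖ ^ 2) :
    ((∃ D : ℝ, 0 < D ∧ ∀ x : H, Summable (fun k => ‖(inner ℂ (g k) x : ℂ)‖ ^ 2) ∧
        ∑' k, ‖(inner ℂ (g k) x : ℂ)‖ ^ 2 ≤ D * ‖x‖ ^ 2) ∧
      (∀ x : H, HasSum (fun k => (inner ℂ (g k) x : ℂ) • f k) (K x))) ↔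
      ∃ M : lp (fun _ : I => ℂ) 2 →L[ℂ] H,
        TF.comp (adjoint M) = K ∧ ∀ k, g k = M (lp.single 2 k 1) := by
  have h2R : ((2 : ENNReal).toReal) = (2 : ℝ) := by norm_num
  constructor
  · rintro ⟨⟨D, hD, hg⟩, hsum⟩
    -- membership of analysis sequence in ℓ²
    have hmem : ∀ x : H, Memℓp (fun k : I => (inner ℂ (g k) x : ℂ)) 2 := by
      intro x
      apply memℓp_gen
      rw [h2R]
      simpa [rpow_two_eq] using (hg x).1
    -- analysis operator as a linear map
    let A₀ : H →ₗ[ℂ] lp (fun _ : I => ℂ) 2 :=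
      { toFun := fun x => ⟨fun k => (inner ℂ (g k) x : ℂ), hmem x⟩
        map_add' := by
          intro x y
          apply lp.ext
          funext k
          simp [inner_add_right, lp.coeFn_add, Pi.add_apply]
          rfl
        map_smul' := by
          intro c x
          apply lp.ext
          funext k
          simp [inner_smul_right, lp.coeFn_smul] }
    have hA₀ : ∀ x : H, ‖A₀ x‖ ≤ Real.sqrt D * ‖x‖ := by
      intro x
      have hsq : ‖A₀ x‖ ^ (2:ℝ) = ∑' k, ‖(inner ℂ (g k) x : ℂ)‖ ^ (2:ℝ) := by
        have h := lp.norm_rpow_eq_tsum (p := 2) (by norm_num) (A₀ x)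
        rw [h2R] at h
        exact h
      have hsq' : ‖A₀ x‖ ^ 2 = ∑' k, ‖(inner ℂ (g k) x : ℂ)‖ ^ 2 := by
        simpa [rpow_two_eq] using hsq
      have hle : ‖A₀ x‖ ^ 2 ≤ D * ‖x‖ ^ 2 := hsq' ▸ (hg x).2
      have := Real.sqrt_le_sqrt hle
      rwa [Real.sqrt_sq (norm_nonneg _), Real.sqrt_mul hD.le, Real.sqrt_sq (norm_nonneg _)]
        at this
    let A : H →L[ℂ] lp (fun _ : I => ℂ) 2 := A₀.mkContinuous (Real.sqrt D) hA₀
    have hAapply : ∀ (x : H) (k : I), (A x : ∀ _ : I, ℂ) k = (inner ℂ (g k) x : ℂ) := fun _ _ => rfl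
    refine ⟨adjoint A, ?_, ?_⟩
    · rw [adjoint_adjoint]
      ext x
      exact ((hasSum_TF_apply TF f hTF (A x)).unique (by simpa [hAapply] using hsum x))
    · intro k
      refine ext_inner_right ℂ fun x => ?_
      rw [adjoint_inner_left, lp.inner_single_left, hAapply]
      simp
  · rintro ⟨M, hM, hgM⟩
    have key : ∀ (x : H) (k : I),
        (inner ℂ (g k) x : ℂ) = ((adjoint M x : lp (fun _ : I => ℂ) 2) : ∀ _ : I, ℂ) k := by
      intro x k
      rw [hgM k]
      conv_lhs => rw [← adjoint_adjoint M]
      rw [adjoint_inner_left, lp.inner_single_left]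
      simp
    have hsummable : ∀ x : H, Summable (fun k => ‖(inner ℂ (g k) x : ℂ)‖ ^ 2) := by
      intro x
      have := (lp.memℓp (adjoint M x)).summable (p := 2) (by norm_num)
      rw [h2R] at this
      simp_rw [key x]
      simpa [rpow_two_eq] using this
    refine ⟨⟨‖adjoint M‖ ^ 2 + 1, by positivity, fun x => ⟨hsummable x, ?_⟩⟩, fun x => ?_⟩
    · have hsq : ‖adjoint M x‖ ^ 2 = ∑' k, ‖(inner ℂ (g k) x : ℂ)‖ ^ 2 := by
        have := lp.norm_rpow_eq_tsum (p := 2) (by norm_num) (adjoint M x)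
        rw [h2R] at this
        simp_rw [key x]
        simpa [rpow_two_eq] using this
      calc ∑' k, ‖(inner ℂ (g k) x : ℂ)‖ ^ 2 = ‖adjoint M x‖ ^ 2 := hsq.symm
        _ ≤ (‖adjoint M‖ * ‖x‖) ^ 2 := by
            apply pow_le_pow_left₀ (norm_nonneg _) ((adjoint M).le_opNorm x)
        _ ≤ (‖adjoint M‖ ^ 2 + 1) * ‖x‖ ^ 2 := by nlinarith [norm_nonneg x, sq_nonneg ‖x‖]
    · have h := hasSum_TF_apply TF f hTF (adjoint M x)
      have hK : TF (adjoint M x) = K x := by rw [← hM]; rfl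
      rw [hK] at h
      convert h using 2 with k
      rw [key x]
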